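/- Let $Q_r \subset \mathbb{R}^n$ be a closed cube of side $r > 0$, centered so that the concentric open cube $\mathring{Q}_{2r}$ of side $2r$ contains it, and let $A \subseteq \mathbb{R}^n$ be open with $\min\{|A \cap Q_r|, |Q_r \setminus \overline{A}|\} \ge c_\sharp r^n$ for some $c_\sharp \in (0,1)$. Then for any $k \in \mathbb{N}$ there exists a finite family $\{Q^{(j)}\}_{j=1}^N$ of pairwise non-overlapping closed cubes of side $r/k$, each contained in $\mathring{Q}_{2r}$ and centered at some point $x_j \in Q_r \cap \partial A$, with $N \ge c_{\star\star} k^{n-1}$ for some $c_{\star\star} \in (0,1)$ depending only on $n$ and $c_\sharp$. -/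

import Mathlib

open MeasureTheory Set

/-- Closed cube of side `a` centered at `c`. -/
def closedCube (n : ℕ) (c : Fin n → ℝ) (a : ℝ) : Set (Fin n → ℝ) :=
  {y | ∀ i, |y i - c i| ≤ a / 2}

/-- Open cube of side `a` centered at `c`. -/
def openCube (n : ℕ) (c : Fin n → ℝ) (a : ℝ) : Set (Fin n → ℝ) :=
  {y | ∀ i, |y i - c i| < a / 2}

lemma closedCube_eq_pi (n : ℕ) (c : Fin n → ℝ) (a : ℝ) :
    closedCube n c a = Set.pi Set.univ (fun i => Set.Icc (c i - a/2) (c i + a/2)) := by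
  ext y
  simp only [closedCube, Set.mem_setOf_eq, Set.mem_pi, Set.mem_univ, forall_true_left,
    Set.mem_Icc, abs_sub_le_iff]
  constructor <;> intro h i <;> have := h i <;> constructor <;> linarith [this.1, this.2]

lemma openCube_eq_pi (n : ℕ) (c : Fin n → ℝ) (a : ℝ) :
    openCube n c a = Set.pi Set.univ (fun i => Set.Ioo (c i - a/2) (c i + a/2)) := by
  ext y
  simp only [openCube, Set.mem_setOf_eq, Set.mem_pi, Set.mem_univ, forall_true_left,
    Set.mem_Ioo, abs_sub_lt_iff]
  constructor <;> intro h i <;> have := h i <;> constructor <;> linarith [this.1, this.2]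

lemma volume_closedCube (n : ℕ) (c : Fin n → ℝ) (a : ℝ) :
    volume (closedCube n c a) = (ENNReal.ofReal a) ^ n := by
  rw [closedCube_eq_pi, volume_pi_pi]
  have : ∀ i : Fin n, volume (Set.Icc (c i - a/2) (c i + a/2)) = ENNReal.ofReal a := by
    intro i; rw [Real.volume_Icc]; congr 1; ring
  simp [this]

lemma isClosed_closedCube (n : ℕ) (c : Fin n → ℝ) (a : ℝ) : IsClosed (closedCube n c a) := by
  rw [closedCube_eq_pi]
  exact isClosed_set_pi (fun i _ => isClosed_Icc)

lemma convex_closedCube (n : ℕ) (c : Fin n → ℝ) (a : ℝ) : Convex ℝ (closedCube n c a) := by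
  rw [closedCube_eq_pi]
  exact convex_pi (fun i _ => convex_Icc _ _)

lemma convex_openCube (n : ℕ) (c : Fin n → ℝ) (a : ℝ) : Convex ℝ (openCube n c a) := by
  rw [openCube_eq_pi]
  exact convex_pi (fun i _ => convex_Ioo _ _)

section Trichotomy

variable {E : Type*} [TopologicalSpace E]

lemma trichotomy_of_preconnected {A S : Set E} (hA : IsOpen A) (hS : IsPreconnected S)
    (h : S ∩ frontier A = ∅) : S ⊆ A ∨ S ⊆ (closure A)ᶜ := by
  apply IsPreconnected.subset_or_subset hA (isClosed_closure (s := A)).isOpen_compl ?_ ?_ hS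
  · exact Set.disjoint_compl_right_iff_subset.mpr subset_closure
  · intro x hx
    by_cases hc : x ∈ closure A
    · left
      by_contra hxA
      exact (Set.eq_empty_iff_forall_notMem.1 h x) ⟨hx, hc, by rwa [hA.interior_eq]⟩
    · right; exact hc

/-- a preconnected set meeting `A` and the complement of `closure A` meets `frontier A`. -/
lemma frontier_point_of_preconnected {A S : Set E} (hA : IsOpen A) (hS : IsPreconnected S)
    (h1 : (S ∩ A).Nonempty) (h2 : (S \ closure A).Nonempty) :
    (S ∩ frontier A).Nonempty := by
  rw [Set.nonempty_iff_ne_empty]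
  intro h
  rcases trichotomy_of_preconnected hA hS h with hs | hs
  · obtain ⟨x, hx⟩ := h2
    exact hx.2 (subset_closure (hs hx.1))
  · obtain ⟨x, hx⟩ := h1
    exact (hs hx.1) (subset_closure hx.2)

end Trichotomy
section Comb

variable {n k : ℕ}

/-- the point on the `j`-line with low coords from `z`, high coords from `x`, coord `j` = `m`. -/
def qpt (j : Fin n) (m : Fin k) (x z : Fin n → Fin k) : Fin n → Fin k :=
  fun i => if i < j then z i else if i = j then m else x i

lemma line_const (τ : (Fin n → Fin k) → Fin 3)
    (adj : ∀ x y : Fin n → Fin k, ∀ j : Fin n, (∀ i, i ≠ j → x i = y i) →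
      ((y j : ℕ) = (x j : ℕ) + 1) → τ x ≠ 2 → τ y ≠ 2 → τ x = τ y)
    (j : Fin n) (L : Fin k → (Fin n → Fin k))
    (hL : ∀ m m' i, i ≠ j → L m i = L m' i) (hLj : ∀ m, L m j = m)
    (hF : ∀ m, τ (L m) ≠ 2) : ∀ m m', τ (L m) = τ (L m') := by
  have step : ∀ (a : ℕ) (ha : a < k) (ha' : a + 1 < k),
      τ (L ⟨a, ha⟩) = τ (L ⟨a + 1, ha'⟩) := by
    intro a ha ha'
    apply adj _ _ j (fun i hi => hL _ _ i hi) _ (hF _) (hF _)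
    rw [hLj, hLj]
  have aux : ∀ (b a : ℕ) (ha : a < k) (hb : b < k), a ≤ b →
      τ (L ⟨a, ha⟩) = τ (L ⟨b, hb⟩) := by
    intro b
    induction b with
    | zero =>
      intro a ha hb hab
      have : a = 0 := by omega
      subst this
      rfl
    | succ b ih =>
      intro a ha hb hab
      rcases Nat.lt_or_ge a (b+1) with h | h
      · have hab' : a ≤ b := by omega
        rw [ih a ha (by omega) hab', step b (by omega) hb]
      · have : a = b + 1 := by omega
        subst this; rfl
  intro m m'
  rcases le_total (m : ℕ) (m' : ℕ) with h | h
  · have := aux m' m m.isLt m'.isLt h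
    rwa [Fin.eta, Fin.eta] at this
  · have := aux m m' m'.isLt m.isLt h
    rw [Fin.eta, Fin.eta] at this
    exact this.symm

lemma chain (hk : 0 < k) (τ : (Fin n → Fin k) → Fin 3)
    (adj : ∀ x y : Fin n → Fin k, ∀ j : Fin n, (∀ i, i ≠ j → x i = y i) →
      ((y j : ℕ) = (x j : ℕ) + 1) → τ x ≠ 2 → τ y ≠ 2 → τ x = τ y)
    (x z : Fin n → Fin k) (hx : τ x = 0) (hz : τ z = 1) :
    ∃ (j : Fin n) (m : Fin k), τ (qpt j m x z) = 2 := by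
  by_contra hcon
  push_neg at hcon
  set p : ℕ → (Fin n → Fin k) := fun t i => if (i : ℕ) < t then z i else x i with hp
  have hconst : ∀ t ≤ n, τ (p t) = τ x := by
    intro t
    induction t with
    | zero =>
      intro _
      have : p 0 = x := by funext i; simp [hp]
      rw [this]
    | succ t ih =>
      intro ht
      have htn : t < n := by omega
      set j : Fin n := ⟨t, htn⟩ with hj
      set L : Fin k → (Fin n → Fin k) := fun m => qpt j m x z with hLdef
      have h1 : p t = L ⟨(x j : ℕ), (x j).isLt⟩ := by
        funext i
        simp only [hp, hLdef, qpt]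
        rcases lt_trichotomy (i : ℕ) t with h | h | h
        · simp [h, show i < j from h]
        · have hij : i = j := Fin.ext h
          simp [hij, show ¬ (j < j) from lt_irrefl j, show ¬ ((j:ℕ) < t) from lt_irrefl t]
        · have h1 : ¬ ((i:ℕ) < t) := by omega
          have h2 : ¬ (i < j) := by rw [Fin.lt_def]; exact h1
          have h3 : i ≠ j := by
            intro hh
            rw [hh, hj] at h
            exact absurd h (by simp)
          simp [h1, h2, h3]
      have h2 : p (t+1) = L ⟨(z j : ℕ), (z j).isLt⟩ := by
        funext i
        simp only [hp, hLdef, qpt]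
        rcases lt_trichotomy (i : ℕ) t with h | h | h
        · simp [show (i:ℕ) < t + 1 by omega, show i < j from h]
        · have hij : i = j := Fin.ext h
          simp [hij, show ¬ (j < j) from lt_irrefl j, show (t:ℕ) < t + 1 by omega, show ¬ (t < (j:ℕ)) from lt_irrefl t]
      
        · have h1 : ¬ ((i:ℕ) < t + 1) := by omega
          have h2 : ¬ (i < j) := by rw [Fin.lt_def]; show ¬ ((i:ℕ) < t); omega
          have h3 : i ≠ j := by
            intro hh
            rw [hh, hj] at h
            exact absurd h (by simp)
          simp [h1, h2, h3]
      have hline := line_const τ adj j L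
        (fun m m' i hi => by
          simp only [hLdef, qpt]
          rcases lt_or_ge i j with h | h
          · simp [h]
          · have : ¬ i < j := not_lt.2 h
            simp [this, hi])
        (fun m => by simp [hLdef, qpt])
        (fun m => hcon j m)
      have ihv := ih (by omega)
      rw [h1] at ihv
      rw [h2, ← ihv]
      exact (hline _ _).symm
  have h0 : p 0 = x := by funext i; simp [hp]
  have hN : p n = z := by funext i; simp [hp, i.isLt]
  have hcc := hconst n le_rfl
  rw [hN, hz, hx] at hcc
  exact absurd hcc (by decide)

end Comb

lemma comb_count (n k : ℕ) (hk : 0 < k) (τ : (Fin n → Fin k) → Fin 3)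
    (adj : ∀ x y : Fin n → Fin k, ∀ j : Fin n, (∀ i, i ≠ j → x i = y i) →
      ((y j : ℕ) = (x j : ℕ) + 1) → τ x ≠ 2 → τ y ≠ 2 → τ x = τ y) :
    (Finset.univ.filter (fun x => τ x = 0)).card * (Finset.univ.filter (fun x => τ x = 1)).card
      ≤ n * ((Finset.univ.filter (fun x => τ x = 2)).card * k ^ (n + 1)) := by
  classical
  set G := Finset.univ.filter (fun x => τ x = 0) with hG
  set H := Finset.univ.filter (fun x => τ x = 1) with hH
  set F := Finset.univ.filter (fun x => τ x = 2) with hF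
  have hsub : G ×ˢ H ⊆ Finset.univ.biUnion (fun j : Fin n =>
      (Finset.univ ×ˢ Finset.univ).filter (fun p : (Fin n → Fin k) × (Fin n → Fin k) =>
        ∃ m, τ (qpt j m p.1 p.2) = 2)) := by
    intro p hp
    rw [Finset.mem_product, hG, hH] at hp
    obtain ⟨hp1, hp2⟩ := hp
    rw [Finset.mem_filter] at hp1 hp2
    obtain ⟨j, m, hjm⟩ := chain hk τ adj p.1 p.2 hp1.2 hp2.2
    simp only [Finset.mem_biUnion, Finset.mem_filter, Finset.mem_univ, Finset.mem_product,
      true_and, and_true]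
    exact ⟨j, m, hjm⟩
  have hcard : (G ×ˢ H).card ≤ ∑ j : Fin n,
      ((Finset.univ ×ˢ Finset.univ).filter (fun p : (Fin n → Fin k) × (Fin n → Fin k) =>
        ∃ m, τ (qpt j m p.1 p.2) = 2)).card :=
    le_trans (Finset.card_le_card hsub) (Finset.card_biUnion_le)
  have hterm : ∀ j : Fin n,
      ((Finset.univ ×ˢ Finset.univ).filter (fun p : (Fin n → Fin k) × (Fin n → Fin k) =>
        ∃ m, τ (qpt j m p.1 p.2) = 2)).card ≤ F.card * k ^ (n+1) := by
    intro j
    set s := (Finset.univ ×ˢ Finset.univ).filter (fun p : (Fin n → Fin k) × (Fin n → Fin k) =>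
        ∃ m, τ (qpt j m p.1 p.2) = 2) with hs
    set t := F ×ˢ ((Finset.univ : Finset (Fin n → Fin k)) ×ˢ (Finset.univ : Finset (Fin k)))
      with ht
    have : s.card ≤ t.card := by
      apply Finset.card_le_card_of_injOn
        (fun p => if h : ∃ m, τ (qpt j m p.1 p.2) = 2 then
          (qpt j (Classical.choose h) p.1 p.2,
            ((fun i => if i ≤ j then p.1 i else p.2 i), p.2 j))
          else (fun _ => ⟨0, hk⟩, (fun _ => ⟨0, hk⟩, ⟨0, hk⟩)))
      · intro p hp
        simp only [Finset.mem_coe, hs, Finset.mem_filter] at hp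
        dsimp only; rw [dif_pos hp.2]
        rw [Finset.mem_coe, ht, Finset.mem_product]
        refine ⟨?_, by simp⟩
        rw [hF, Finset.mem_filter]
        exact ⟨Finset.mem_univ _, Classical.choose_spec hp.2⟩
      · intro p hp p' hp' heq
        simp only [Finset.mem_coe, hs, Finset.mem_filter] at hp hp'
        dsimp only at heq
        rw [dif_pos hp.2, dif_pos hp'.2] at heq
        simp only [Prod.mk.injEq] at heq
        obtain ⟨e1, e2, e3⟩ := heq
        have hx : p.1 = p'.1 := by
          funext i
          rcases le_or_gt i j with h | h
          · have := congrFun e2 i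
            simpa [if_pos h] using this
          · have := congrFun e1 i
            have h2 : ¬ (i < j) := by exact not_lt.2 h.le
            have h3 : i ≠ j := ne_of_gt h
            simpa [qpt, h2, h3] using this
        have hz : p.2 = p'.2 := by
          funext i
          rcases lt_trichotomy i j with h | h | h
          · have := congrFun e1 i
            simpa [qpt, h] using this
          · subst h
            exact e3
          · have := congrFun e2 i
            have h2 : ¬ (i ≤ j) := not_le.2 h
            simpa [if_neg h2] using this
        exact Prod.ext hx hz
    calc s.card ≤ t.card := this
      _ = F.card * (k ^ n * k) := by
          rw [ht]
          simp [Finset.card_product]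
      _ = F.card * k ^ (n+1) := by ring
  calc G.card * H.card = (G ×ˢ H).card := (Finset.card_product G H).symm
    _ ≤ ∑ j : Fin n, _ := hcard
    _ ≤ ∑ j : Fin n, F.card * k ^ (n+1) := Finset.sum_le_sum (fun j _ => hterm j)
    _ = n * (F.card * k ^ (n+1)) := by simp [Finset.sum_const, mul_comm]


lemma floor_interval (k : ℕ) (hk : 0 < k) (r t : ℝ) (hr : 0 < r) (ht0 : 0 ≤ t) (ht1 : t ≤ r) :
    ((min ⌊t * k / r⌋₊ (k-1) : ℕ) : ℝ) * (r/k) ≤ t ∧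
      t ≤ ((min ⌊t * k / r⌋₊ (k-1) : ℕ) + 1 : ℝ) * (r/k) := by
  have hkR : (0:ℝ) < k := by exact_mod_cast hk
  have hx0 : 0 ≤ t * k / r := by positivity
  rcases le_or_gt ⌊t * k / r⌋₊ (k-1) with h | h
  · rw [min_eq_left h]
    constructor
    · have h1 : (⌊t * k / r⌋₊ : ℝ) ≤ t * k / r := Nat.floor_le hx0
      calc (⌊t * k / r⌋₊ : ℝ) * (r/k) ≤ (t * k / r) * (r/k) := by
            apply mul_le_mul_of_nonneg_right h1 (by positivity)
        _ = t := by field_simp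
    · have h1 : t * k / r < (⌊t * k / r⌋₊ : ℝ) + 1 := Nat.lt_floor_add_one _
      have h2 : t * k < ((⌊t * k / r⌋₊ : ℝ) + 1) * r := (div_lt_iff₀ hr).1 h1
      have h3 : t < ((⌊t * k / r⌋₊ : ℝ) + 1) * (r / k) := by
        rw [mul_div_assoc', lt_div_iff₀ hkR]
        linarith
      exact h3.le
  · rw [min_eq_right (by omega)]
    have hkfl : (k : ℝ) ≤ t * k / r := by
      have : k ≤ ⌊t * k / r⌋₊ := by omega
      exact_mod_cast (Nat.le_floor_iff hx0).1 this
    have htr : r ≤ t := by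
      rw [le_div_iff₀ hr] at hkfl
      nlinarith
    have ht : t = r := le_antisymm ht1 htr
    subst ht
    have hcast : ((k - 1 : ℕ) : ℝ) = (k : ℝ) - 1 := by
      have : (1:ℕ) ≤ k := hk
      push_cast [this]
      ring
    rw [hcast]
    constructor
    · have : ((k:ℝ) - 1) * (t/k) = t - t/k := by field_simp
      rw [this]
      have : 0 < t / k := by positivity
      linarith
    · have : ((k:ℝ) - 1 + 1) * (t/k) = t := by field_simp; ring
      rw [this]


lemma volume_openCube (n : ℕ) (c : Fin n → ℝ) (a : ℝ) :
    volume (openCube n c a) = (ENNReal.ofReal a) ^ n := by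
  rw [openCube_eq_pi, volume_pi_pi]
  have : ∀ i : Fin n, volume (Set.Ioo (c i - a/2) (c i + a/2)) = ENNReal.ofReal a := by
    intro i; rw [Real.volume_Ioo]; congr 1; ring
  simp [this]

lemma isOpen_openCube (n : ℕ) (c : Fin n → ℝ) (a : ℝ) : IsOpen (openCube n c a) := by
  rw [openCube_eq_pi]
  exact isOpen_set_pi Set.finite_univ (fun i _ => isOpen_Ioo)

/-- easy case: a single frontier point in the open cube. -/
lemma easy_point (n k : ℕ) (hk : 0 < k) (r : ℝ) (hr : 0 < r) (c : Fin n → ℝ)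
    (A : Set (Fin n → ℝ)) (hA : IsOpen A)
    (h1 : 0 < volume (A ∩ closedCube n c r))
    (h2 : 0 < volume (closedCube n c r \ closure A)) :
    ∃ x, x ∈ closedCube n c r ∩ frontier A ∧
      closedCube n x (r/k) ⊆ openCube n c (2*r) := by
  have hdiff : volume (closedCube n c r \ openCube n c r) = 0 := by
    have hsub : openCube n c r ⊆ closedCube n c r := fun y hy i => (hy i).le
    rw [measure_diff hsub (isOpen_openCube n c r).nullMeasurableSet
      (by rw [volume_openCube]; exact ENNReal.pow_ne_top ENNReal.ofReal_ne_top)]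
    rw [volume_openCube, volume_closedCube, tsub_self]
  have hne1 : (A ∩ openCube n c r).Nonempty := by
    apply nonempty_of_measure_ne_zero (μ := volume)
    intro h0
    have : A ∩ closedCube n c r ⊆ (A ∩ openCube n c r) ∪ (closedCube n c r \ openCube n c r) := by
      intro y hy
      by_cases hyo : y ∈ openCube n c r
      · exact Or.inl ⟨hy.1, hyo⟩
      · exact Or.inr ⟨hy.2, hyo⟩
    have hle := le_trans (measure_mono (μ := volume) this) (measure_union_le _ _)
    rw [h0, hdiff] at hle
    simp at hle
    rw [hle] at h1
    exact lt_irrefl _ h1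
  have hne2 : (openCube n c r \ closure A).Nonempty := by
    apply nonempty_of_measure_ne_zero (μ := volume)
    intro h0
    have : closedCube n c r \ closure A ⊆ (openCube n c r \ closure A) ∪ (closedCube n c r \ openCube n c r) := by
      intro y hy
      by_cases hyo : y ∈ openCube n c r
      · exact Or.inl ⟨hyo, hy.2⟩
      · exact Or.inr ⟨hy.1, hyo⟩
    have hle := le_trans (measure_mono (μ := volume) this) (measure_union_le _ _)
    rw [h0, hdiff] at hle
    simp at hle
    rw [hle] at h2
    exact lt_irrefl _ h2
  obtain ⟨x, hxo, hxf⟩ := frontier_point_of_preconnected hA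
    (convex_openCube n c r).isPreconnected (by rwa [Set.inter_comm] at hne1) hne2
  refine ⟨x, ⟨fun i => (hxo i).le, hxf⟩, ?_⟩
  intro y hy i
  have h1 := hy i
  have h2 := hxo i
  have hkR : (1:ℝ) ≤ (k:ℝ) := by exact_mod_cast hk
  have hrk : r / k / 2 ≤ r / 2 := by
    rw [div_le_div_iff₀ (by norm_num) (by norm_num)]
    have : r / k ≤ r := by
      rw [div_le_iff₀ (by positivity)]
      nlinarith
    linarith
  have : |y i - c i| ≤ |y i - x i| + |x i - c i| := abs_sub_le _ _ _
  have hgoal : |y i - c i| < r := by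
    calc |y i - c i| ≤ |y i - x i| + |x i - c i| := abs_sub_le _ _ _
      _ < r / k / 2 + r / 2 := by linarith [h1, h2]
      _ ≤ r / 2 + r / 2 := by linarith
      _ = r := by ring
  calc |y i - c i| < r := hgoal
    _ = 2 * r / 2 := by ring

set_option maxHeartbeats 2000000

/-- one can find at least `c⋆⋆ k^(n-1)` non-overlapping closed cubes
of side `r/k`, contained in the open concentric double cube and centered at points
of `Q_r ∩ ∂A`. -/
theorem statement_3 (n : ℕ) (hn : 1 ≤ n) (csharp : ℝ) (hcsharp : csharp ∈ Set.Ioo (0 : ℝ) 1) :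
    ∃ cstst : ℝ, cstst ∈ Set.Ioo (0 : ℝ) 1 ∧
      ∀ (r : ℝ), 0 < r → ∀ (c : Fin n → ℝ) (A : Set (Fin n → ℝ)), IsOpen A →
        csharp * r ^ n ≤
          min (volume (A ∩ closedCube n c r)).toReal
              (volume (closedCube n c r \ closure A)).toReal →
        ∀ k : ℕ, 0 < k →
          ∃ (N : ℕ) (x : Fin N → (Fin n → ℝ)),
            cstst * (k : ℝ) ^ (n - 1) ≤ (N : ℝ) ∧
            (∀ j, x j ∈ closedCube n c r ∩ frontier A) ∧
            (∀ j, closedCube n (x j) (r / k) ⊆ openCube n c (2 * r)) ∧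
            (∀ i j, i ≠ j →
              Disjoint (openCube n (x i) (r / k)) (openCube n (x j) (r / k))) := by
  classical
  obtain ⟨hcs0, hcs1⟩ := hcsharp
  have hnR : (1:ℝ) ≤ n := by exact_mod_cast hn
  set cstst : ℝ := csharp^2 / (n * 2^(n+2)) with hcstst
  have hcst0 : 0 < cstst := by
    apply div_pos (by positivity)
    positivity
  have hcst1 : cstst < 1 := by
    rw [hcstst, div_lt_one (by positivity)]
    have h1 : csharp^2 < 1 := by nlinarith
    have h2 : (1:ℝ) ≤ (n:ℝ) * 2^(n+2) := by
      have : (1:ℝ) ≤ 2^(n+2) := one_le_pow₀ (by norm_num)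
      nlinarith
    linarith
  refine ⟨cstst, ⟨hcst0, hcst1⟩, ?_⟩
  intro r hr c A hA hvol k hk
  -- basic volume positivity
  have hvol1 : csharp * r ^ n ≤ (volume (A ∩ closedCube n c r)).toReal :=
    le_trans hvol (min_le_left _ _)
  have hvol2 : csharp * r ^ n ≤ (volume (closedCube n c r \ closure A)).toReal :=
    le_trans hvol (min_le_right _ _)
  have hpos1 : 0 < volume (A ∩ closedCube n c r) := by
    rcases Classical.em (volume (A ∩ closedCube n c r) = 0) with h | h
    · rw [h] at hvol1; simp at hvol1; nlinarith [pow_pos hr n]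
    · exact pos_iff_ne_zero.mpr h
  have hpos2 : 0 < volume (closedCube n c r \ closure A) := by
    rcases Classical.em (volume (closedCube n c r \ closure A) = 0) with h | h
    · rw [h] at hvol2; simp at hvol2; nlinarith [pow_pos hr n]
    · exact pos_iff_ne_zero.mpr h
  rcases Nat.lt_or_ge k 2 with hk2 | hk2
  · -- k = 1 : easy case with one point
    obtain ⟨x, hx1, hx2⟩ := easy_point n k hk r hr c A hA hpos1 hpos2
    refine ⟨1, fun _ => x, ?_, fun _ => hx1, fun _ => hx2, fun i j hij => absurd (Subsingleton.elim i j) hij⟩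
    have hk1 : k = 1 := by omega
    subst hk1
    simp only [Nat.cast_one, one_pow, mul_one, Nat.cast_ofNat]
    norm_num
    linarith [hcst1]
  -- main case : k ≥ 2
  have hkR : (0:ℝ) < k := by exact_mod_cast hk
  have hk2R : (2:ℝ) ≤ k := by exact_mod_cast hk2
  have hrk : (0:ℝ) < r / k := div_pos hr hkR
  set ctr : (Fin n → Fin k) → (Fin n → ℝ) :=
    fun α i => c i - r/2 + (((α i : ℕ) : ℝ) + 1/2) * (r/k) with hctr
  set Qa : (Fin n → Fin k) → Set (Fin n → ℝ) := fun α => closedCube n (ctr α) (r/k) with hQa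
  have hctrc : ∀ α i, |ctr α i - c i| ≤ r/2 - r/(2*k) := by
    intro α i
    have hai : ((α i : ℕ) : ℝ) + 1 ≤ (k:ℝ) := by exact_mod_cast (α i).isLt
    have hai0 : (0:ℝ) ≤ ((α i : ℕ) : ℝ) := Nat.cast_nonneg _
    have hexp : ctr α i - c i = (((α i : ℕ) : ℝ) + 1/2) * (r/k) - r/2 := by
      rw [hctr]; ring
    rw [hexp, abs_le]
    have he : r/(2*k) = (r/k)/2 := by ring
    have hkr : (k:ℝ) * (r/k) = r := by field_simp
    have h1 := mul_le_mul_of_nonneg_right hai hrk.le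
    rw [hkr] at h1
    have e1 : (((α i : ℕ):ℝ)+1)*(r/k) = (((α i : ℕ):ℝ)+1/2)*(r/k) + (r/k)/2 := by ring
    have h2 := mul_le_mul_of_nonneg_right (by linarith : (1/2:ℝ) ≤ ((α i : ℕ):ℝ) + 1/2) hrk.le
    have e2 : (1/2:ℝ) * (r/k) = (r/k)/2 := by ring
    constructor
    · rw [he]; linarith
    · rw [he]; linarith
  have hQmem : ∀ α y, y ∈ Qa α ↔ ∀ i, |y i - ctr α i| ≤ (r/k)/2 := by
    intro α y; rw [hQa]; rfl
  have hQsub : ∀ α, Qa α ⊆ closedCube n c r := by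
    intro α y hy i
    have h1 := (hQmem α y).1 hy i
    have h2 := hctrc α i
    have h3 : |y i - c i| ≤ |y i - ctr α i| + |ctr α i - c i| := abs_sub_le _ _ _
    have he : r/(2*k) = (r/k)/2 := by ring
    rw [he] at h2
    linarith
  have hcover : ∀ y ∈ closedCube n c r, ∃ α, y ∈ Qa α := by
    intro y hy
    set α₀ : Fin n → Fin k := fun i => ⟨min ⌊(y i - (c i - r/2)) * k / r⌋₊ (k-1),
      lt_of_le_of_lt (min_le_right _ _) (by omega)⟩ with hα₀
    refine ⟨α₀, (hQmem _ _).2 (fun i => ?_)⟩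
    have hyi := abs_le.1 (hy i)
    have ht0 : 0 ≤ y i - (c i - r/2) := by linarith [hyi.1]
    have ht1 : y i - (c i - r/2) ≤ r := by linarith [hyi.2]
    obtain ⟨hl, hu⟩ := floor_interval k (by omega) r (y i - (c i - r/2)) hr ht0 ht1
    have hval : ((α₀ i : ℕ) : ℝ) = ((min ⌊(y i - (c i - r/2)) * k / r⌋₊ (k-1) : ℕ) : ℝ) := rfl
    have hexp : y i - ctr α₀ i = (y i - (c i - r/2)) - (((α₀ i : ℕ):ℝ) + 1/2) * (r/k) := by
      rw [hctr]; ring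
    have hprod : (((α₀ i : ℕ):ℝ) + 1/2) * (r/k) = ((α₀ i : ℕ):ℝ)*(r/k) + (r/k)/2 := by ring
    rw [hexp, hprod, abs_le, hval]
    constructor
    · linarith
    · linarith
  set τ : (Fin n → Fin k) → Fin 3 := fun α =>
    if Qa α ⊆ A then 0 else if Qa α ⊆ (closure A)ᶜ then 1 else 2 with hτ
  have hctrmem : ∀ α, ctr α ∈ Qa α := by
    intro α
    rw [hQmem]
    intro i
    simp only [sub_self, abs_zero]
    positivity
  have hτdef : ∀ α, τ α = if Qa α ⊆ A then 0 else if Qa α ⊆ (closure A)ᶜ then 1 else 2 :=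
    fun α => rfl
  have hτ0 : ∀ α, τ α = 0 → Qa α ⊆ A := by
    intro α h
    rw [hτdef] at h
    by_cases h1 : Qa α ⊆ A
    · exact h1
    · rw [if_neg h1] at h
      by_cases h2 : Qa α ⊆ (closure A)ᶜ
      · rw [if_pos h2] at h; exact absurd h (by decide)
      · rw [if_neg h2] at h; exact absurd h (by decide)
  have hτ1 : ∀ α, τ α = 1 → Qa α ⊆ (closure A)ᶜ := by
    intro α h
    rw [hτdef] at h
    by_cases h1 : Qa α ⊆ A
    · rw [if_pos h1] at h; exact absurd h (by decide)
    · rw [if_neg h1] at h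
      by_cases h2 : Qa α ⊆ (closure A)ᶜ
      · exact h2
      · rw [if_neg h2] at h; exact absurd h (by decide)
  have hτ2' : ∀ α, τ α ≠ 2 → Qa α ⊆ A ∨ Qa α ⊆ (closure A)ᶜ := by
    intro α h
    by_cases h1 : Qa α ⊆ A
    · exact Or.inl h1
    · by_cases h2 : Qa α ⊆ (closure A)ᶜ
      · exact Or.inr h2
      · rw [hτdef, if_neg h1, if_neg h2] at h; exact absurd rfl h
  have hτ2 : ∀ α, τ α = 2 → (Qa α ∩ frontier A).Nonempty := by
    intro α h
    by_contra hne
    rw [Set.not_nonempty_iff_eq_empty] at hne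
    rcases trichotomy_of_preconnected hA (convex_closedCube n (ctr α) (r/k)).isPreconnected
      hne with h1 | h1
    · rw [hτdef, if_pos (by rw [hQa]; exact h1)] at h; exact absurd h (by decide)
    · have h2 : Qa α ⊆ (closure A)ᶜ := by rw [hQa]; exact h1
      by_cases h3 : Qa α ⊆ A
      · rw [hτdef, if_pos h3] at h; exact absurd h (by decide)
      · rw [hτdef, if_neg h3, if_pos h2] at h; exact absurd h (by decide)
  -- adjacency condition
  have hadj : ∀ x y : Fin n → Fin k, ∀ j : Fin n, (∀ i, i ≠ j → x i = y i) →
      ((y j : ℕ) = (x j : ℕ) + 1) → τ x ≠ 2 → τ y ≠ 2 → τ x = τ y := by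
    intro x y j hxy hyj hx2 hy2
    set p : Fin n → ℝ := fun i => ctr x i + if i = j then (r/k)/2 else 0 with hp
    have hpx : p ∈ Qa x := by
      rw [hQmem]
      intro i
      rw [hp]
      simp only
      by_cases hij : i = j
      · rw [if_pos hij]
        rw [show ctr x i + (r/k)/2 - ctr x i = (r/k)/2 by ring, abs_of_nonneg (by positivity)]
      · rw [if_neg hij]
        simp [abs_of_nonneg, hrk.le]
        positivity
    have hpy : p ∈ Qa y := by
      rw [hQmem]
      intro i
      rw [hp]
      simp only
      by_cases hij : i = j
      · subst hij
        have hcy : ctr y i = ctr x i + r/k := by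
          rw [hctr]
          simp only
          rw [hyj]
          push_cast
          ring
        rw [if_pos rfl, hcy, show ctr x i + (r/k)/2 - (ctr x i + r/k) = -((r/k)/2) by ring,
          abs_neg, abs_of_nonneg (by positivity)]
      · have hcy : ctr y i = ctr x i := by
          rw [hctr]
          simp only
          rw [hxy i hij]
        rw [if_neg hij, hcy]
        simp [abs_of_nonneg, hrk.le]
        positivity
    have hAE : ∀ z : Fin n → ℝ, z ∈ A → z ∈ (closure A)ᶜ → False := by
      intro z h1 h2
      exact h2 (subset_closure h1)
    rcases hτ2' x hx2 with hxA | hxE <;> rcases hτ2' y hy2 with hyA | hyE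
    · rw [hτdef, hτdef, if_pos hxA, if_pos hyA]
    · exact absurd (hAE p (hxA hpx) (hyE hpy)) not_false
    · exact absurd (hAE p (hyA hpy) (hxE hpx)) not_false
    · have hx' : ¬ Qa x ⊆ A := fun hc => hAE (ctr x) (hc (hctrmem x)) (hxE (hctrmem x))
      have hy' : ¬ Qa y ⊆ A := fun hc => hAE (ctr y) (hc (hctrmem y)) (hyE (hctrmem y))
      rw [hτdef, hτdef, if_neg hx', if_neg hy', if_pos hxE, if_pos hyE]
  -- counting sets
  set F := Finset.univ.filter (fun α => τ α = 2) with hsF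
  set G := Finset.univ.filter (fun α => τ α = 0) with hsG
  set H := Finset.univ.filter (fun α => τ α = 1) with hsH
  have hvolQa : ∀ α, volume (Qa α) = (ENNReal.ofReal (r/k))^n := by
    intro α
    rw [hQa]
    exact volume_closedCube n (ctr α) (r/k)
  -- generic counting estimate
  have hcountgen : ∀ (B : Set (Fin n → ℝ)) (S : Finset (Fin n → Fin k)),
      (B ⊆ ⋃ α ∈ S, Qa α) → csharp * r ^ n ≤ (volume B).toReal →
      csharp * (k:ℝ)^n ≤ (S.card : ℝ) := by
    intro B S hBS hvB
    have h1 : volume B ≤ (S.card : ENNReal) * (ENNReal.ofReal (r/k))^n := by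
      calc volume B ≤ volume (⋃ α ∈ S, Qa α) := measure_mono hBS
        _ ≤ ∑ α ∈ S, volume (Qa α) := measure_biUnion_finset_le S Qa
        _ = (S.card : ENNReal) * (ENNReal.ofReal (r/k))^n := by
            rw [Finset.sum_congr rfl (fun α _ => hvolQa α), Finset.sum_const, nsmul_eq_mul]
    have h2 : (volume B).toReal ≤ (S.card : ℝ) * (r/k)^n := by
      have hfin : ((S.card : ENNReal) * (ENNReal.ofReal (r/k))^n) ≠ ⊤ := by
        apply ENNReal.mul_ne_top (by simp)
        exact ENNReal.pow_ne_top ENNReal.ofReal_ne_top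
      have := ENNReal.toReal_mono hfin h1
      rw [ENNReal.toReal_mul, ENNReal.toReal_pow, ENNReal.toReal_ofReal hrk.le] at this
      simpa using this
    have hrn : (r:ℝ)^n = (k:ℝ)^n * (r/k)^n := by
      rw [← mul_pow]
      congr 1
      field_simp
    have h3 : csharp * (k:ℝ)^n * (r/k)^n ≤ (S.card : ℝ) * (r/k)^n := by
      calc csharp * (k:ℝ)^n * (r/k)^n = csharp * r^n := by rw [hrn]; ring
        _ ≤ (volume B).toReal := hvB
        _ ≤ (S.card : ℝ) * (r/k)^n := h2
    exact le_of_mul_le_mul_right h3 (pow_pos hrk n)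
  have hcount1 : csharp * (k:ℝ)^n ≤ ((F.card : ℝ) + (G.card : ℝ)) := by
    set S1 := Finset.univ.filter (fun α => τ α ≠ 1) with hsS1
    have hBS : A ∩ closedCube n c r ⊆ ⋃ α ∈ S1, Qa α := by
      intro y hy
      obtain ⟨α, hα⟩ := hcover y hy.2
      have hmem : α ∈ S1 := by
        rw [hsS1, Finset.mem_filter]
        exact ⟨Finset.mem_univ _, fun hτα => (hτ1 α hτα hα) (subset_closure hy.1)⟩
      exact Set.mem_biUnion hmem hα
    have hS1 := hcountgen _ S1 hBS hvol1
    have hsub : S1 ⊆ G ∪ F := by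
      intro α hα
      rw [hsS1, Finset.mem_filter] at hα
      have : τ α = 0 ∨ τ α = 2 := by
        have h3 : ∀ v : Fin 3, v ≠ 1 → v = 0 ∨ v = 2 := by decide
        exact h3 _ hα.2
      rcases this with h | h
      · exact Finset.mem_union_left _ (by rw [hsG, Finset.mem_filter]; exact ⟨Finset.mem_univ _, h⟩)
      · exact Finset.mem_union_right _ (by rw [hsF, Finset.mem_filter]; exact ⟨Finset.mem_univ _, h⟩)
    have hcard : (S1.card : ℝ) ≤ (F.card : ℝ) + (G.card : ℝ) := by
      have h1 : S1.card ≤ (G ∪ F).card := Finset.card_le_card hsub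
      have h2 : (G ∪ F).card ≤ G.card + F.card := Finset.card_union_le _ _
      have : S1.card ≤ F.card + G.card := by omega
      exact_mod_cast this
    linarith
  have hcount2 : csharp * (k:ℝ)^n ≤ ((F.card : ℝ) + (H.card : ℝ)) := by
    set S2 := Finset.univ.filter (fun α => τ α ≠ 0) with hsS2
    have hBS : closedCube n c r \ closure A ⊆ ⋃ α ∈ S2, Qa α := by
      intro y hy
      obtain ⟨α, hα⟩ := hcover y hy.1
      have hmem : α ∈ S2 := by
        rw [hsS2, Finset.mem_filter]
        exact ⟨Finset.mem_univ _, fun hτα => hy.2 (subset_closure (hτ0 α hτα hα))⟩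
      exact Set.mem_biUnion hmem hα
    have hS2 := hcountgen _ S2 hBS hvol2
    have hsub : S2 ⊆ H ∪ F := by
      intro α hα
      rw [hsS2, Finset.mem_filter] at hα
      have : τ α = 1 ∨ τ α = 2 := by
        have h3 : ∀ v : Fin 3, v ≠ 0 → v = 1 ∨ v = 2 := by decide
        exact h3 _ hα.2
      rcases this with h | h
      · exact Finset.mem_union_left _ (by rw [hsH, Finset.mem_filter]; exact ⟨Finset.mem_univ _, h⟩)
      · exact Finset.mem_union_right _ (by rw [hsF, Finset.mem_filter]; exact ⟨Finset.mem_univ _, h⟩)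
    have hcard : (S2.card : ℝ) ≤ (F.card : ℝ) + (H.card : ℝ) := by
      have h1 : S2.card ≤ (H ∪ F).card := Finset.card_le_card hsub
      have h2 : (H ∪ F).card ≤ H.card + F.card := Finset.card_union_le _ _
      have : S2.card ≤ F.card + H.card := by omega
      exact_mod_cast this
    linarith
  have hnpos : (0:ℝ) < n := by linarith
  have hFreal : csharp^2/(4*n) * (k:ℝ)^(n-1) ≤ (F.card : ℝ) := by
    have hk1R : (1:ℝ) ≤ (k:ℝ) := by linarith
    have hkn1 : (k:ℝ)^(n-1) ≤ (k:ℝ)^n := pow_le_pow_right₀ hk1R (by omega)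
    rcases le_or_gt (csharp/2 * (k:ℝ)^n) (F.card : ℝ) with h | h
    · have h1 : csharp^2/(4*n) ≤ csharp/2 := by
        rw [div_le_div_iff₀ (by linarith) (by norm_num)]
        nlinarith
      have hkpow0 : (0:ℝ) ≤ (k:ℝ)^(n-1) := by positivity
      calc csharp^2/(4*n) * (k:ℝ)^(n-1) ≤ csharp/2 * (k:ℝ)^(n-1) :=
            mul_le_mul_of_nonneg_right h1 hkpow0
        _ ≤ csharp/2 * (k:ℝ)^n := mul_le_mul_of_nonneg_left hkn1 (by linarith)
        _ ≤ (F.card : ℝ) := h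
    · have hG : csharp/2 * (k:ℝ)^n ≤ (G.card:ℝ) := by linarith [hcount1]
      have hH : csharp/2 * (k:ℝ)^n ≤ (H.card:ℝ) := by linarith [hcount2]
      have hcomb := comb_count n k (by omega) τ hadj
      rw [← hsG, ← hsH, ← hsF] at hcomb
      have hcombR : (G.card:ℝ) * (H.card:ℝ) ≤ (n:ℝ) * ((F.card:ℝ) * (k:ℝ)^(n+1)) := by
        exact_mod_cast hcomb
      have hGH : (csharp/2 * (k:ℝ)^n) * (csharp/2 * (k:ℝ)^n) ≤ (G.card:ℝ)*(H.card:ℝ) :=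
        mul_le_mul hG hH (mul_nonneg (by linarith) (by positivity)) (Nat.cast_nonneg _)
      have hpowsplit : (k:ℝ)^n * (k:ℝ)^n = (k:ℝ)^(n+1) * (k:ℝ)^(n-1) := by
        rw [← pow_add, ← pow_add]
        congr 1
        omega
      have hkp1 : (0:ℝ) < (k:ℝ)^(n+1) := by positivity
      have h5 : (csharp^2/4 * (k:ℝ)^(n-1)) * (k:ℝ)^(n+1) ≤ ((n:ℝ) * (F.card:ℝ)) * (k:ℝ)^(n+1) := by
        calc (csharp^2/4 * (k:ℝ)^(n-1)) * (k:ℝ)^(n+1)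
            = csharp^2/4 * ((k:ℝ)^(n+1) * (k:ℝ)^(n-1)) := by ring
          _ = csharp^2/4 * ((k:ℝ)^n * (k:ℝ)^n) := by rw [← hpowsplit]
          _ = (csharp/2 * (k:ℝ)^n) * (csharp/2 * (k:ℝ)^n) := by ring
          _ ≤ (G.card:ℝ)*(H.card:ℝ) := hGH
          _ ≤ (n:ℝ) * ((F.card:ℝ) * (k:ℝ)^(n+1)) := hcombR
          _ = ((n:ℝ) * (F.card:ℝ)) * (k:ℝ)^(n+1) := by ring
      have h6 := le_of_mul_le_mul_right h5 hkp1
      rw [div_mul_eq_mul_div, div_le_iff₀ (by positivity : (0:ℝ) < 4*(n:ℝ))]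
      nlinarith [h6]
  -- parity pigeonhole
  set par : (Fin n → Fin k) → (Fin n → Bool) := fun α i => decide ((α i : ℕ) % 2 = 0) with hpar
  obtain ⟨b, _, hbmax⟩ := Finset.exists_max_image (Finset.univ : Finset (Fin n → Bool))
      (fun b => (F.filter (fun α => par α = b)).card) ⟨fun _ => true, Finset.mem_univ _⟩
  set S := F.filter (fun α => par α = b) with hsS
  have hpigN : F.card ≤ 2^n * S.card := by
    have h1 : F.card = ∑ b' ∈ Finset.univ, (F.filter (fun α => par α = b')).card :=
      Finset.card_eq_sum_card_fiberwise (fun α _ => Finset.mem_univ (par α))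
    have h2 : ∑ b' ∈ Finset.univ, (F.filter (fun α => par α = b')).card ≤
        (Finset.univ : Finset (Fin n → Bool)).card • S.card :=
      Finset.sum_le_card_nsmul _ _ _ (fun b' hb' => hbmax b' hb')
    have h3 : (Finset.univ : Finset (Fin n → Bool)).card = 2^n := by
      simp
    rw [h1]
    rw [h3, smul_eq_mul] at h2
    exact h2
  have hpig : (F.card : ℝ) ≤ 2^n * (S.card : ℝ) := by exact_mod_cast hpigN
  -- choose frontier points
  have hptex : ∀ α ∈ S, ∃ z, z ∈ Qa α ∩ frontier A := by
    intro α hα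
    rw [hsS, Finset.mem_filter] at hα
    have hαF := hα.1
    rw [hsF, Finset.mem_filter] at hαF
    exact hτ2 α hαF.2
  choose! pt hpt2 using hptex
  set e : Fin S.card → (Fin n → Fin k) := fun j => (S.equivFin.symm j : (Fin n → Fin k)) with hse
  have heS : ∀ j, e j ∈ S := fun j => (S.equivFin.symm j).2
  have hinj : Function.Injective e := fun a b h =>
    (Equiv.injective _ (Subtype.coe_injective h))
  refine ⟨S.card, fun j => pt (e j), ?_, ?_, ?_, ?_⟩
  · -- cardinality bound
    have h2n : (0:ℝ) < 2^n := by positivity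
    have hid : cstst * (k:ℝ)^(n-1) * 2^n = csharp^2/(4*n) * (k:ℝ)^(n-1) := by
      rw [hcstst]
      have h4 : (2:ℝ)^(n+2) = 2^n*4 := by rw [pow_add]; norm_num
      rw [h4]
      field_simp
    have : cstst * (k:ℝ)^(n-1) * 2^n ≤ (S.card : ℝ) * 2^n := by
      rw [hid]
      calc csharp^2/(4*n) * (k:ℝ)^(n-1) ≤ (F.card : ℝ) := hFreal
        _ ≤ 2^n * (S.card : ℝ) := hpig
        _ = (S.card : ℝ) * 2^n := by ring
    exact le_of_mul_le_mul_right this h2n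
  · -- membership
    intro j
    obtain ⟨h1, h2⟩ := hpt2 (e j) (heS j)
    exact ⟨hQsub _ h1, h2⟩
  · -- containment in the double cube
    intro j y hy i
    have h1 : |y i - pt (e j) i| ≤ (r/k)/2 := hy i
    have h2 : |pt (e j) i - ctr (e j) i| ≤ (r/k)/2 := (hQmem _ _).1 (hpt2 (e j) (heS j)).1 i
    have h3 : |ctr (e j) i - c i| ≤ r/2 - r/(2*k) := hctrc (e j) i
    have h4 : |y i - c i| ≤ |y i - ctr (e j) i| + |ctr (e j) i - c i| := abs_sub_le _ _ _
    have h5 : |y i - ctr (e j) i| ≤ |y i - pt (e j) i| + |pt (e j) i - ctr (e j) i| :=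
      abs_sub_le _ _ _
    have h6 : r/(2*k) ≤ r/4 := by
      rw [div_le_div_iff₀ (by positivity) (by norm_num)]
      nlinarith
    have h7 : (r/k)/2 = r/(2*k) := by ring
    show |y i - c i| < 2*r/2
    rw [h7] at h1 h2
    have : |y i - c i| ≤ r/2 + r/(2*k) := by linarith
    calc |y i - c i| ≤ r/2 + r/(2*k) := this
      _ ≤ r/2 + r/4 := by linarith
      _ < r := by linarith
      _ = 2*r/2 := by ring
  · -- disjointness
    intro i j hij
    have hαβ : e i ≠ e j := fun h => hij (hinj h)
    obtain ⟨i0, hi0⟩ := Function.ne_iff.1 hαβ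
    have hvalne : ((e i) i0 : ℕ) ≠ ((e j) i0 : ℕ) := fun h => hi0 (Fin.ext h)
    have hparmem : ∀ l : Fin S.card, par (e l) = b := by
      intro l
      have := heS l
      rw [hsS, Finset.mem_filter] at this
      exact this.2
    have hmod : ((e i) i0 : ℕ) % 2 = ((e j) i0 : ℕ) % 2 := by
      have hc := congrFun ((hparmem i).trans (hparmem j).symm) i0
      rw [hpar] at hc
      simp only [decide_eq_decide] at hc
      omega
    have hgapnat : ((e i) i0 : ℕ) + 2 ≤ ((e j) i0 : ℕ) ∨ ((e j) i0 : ℕ) + 2 ≤ ((e i) i0 : ℕ) := by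
      omega
    have hctrgap : 2*(r/k) ≤ |ctr (e i) i0 - ctr (e j) i0| := by
      have hce : ctr (e i) i0 - ctr (e j) i0 =
          ((((e i) i0 : ℕ):ℝ) - (((e j) i0 : ℕ):ℝ))*(r/k) := by
        rw [hctr]; ring
      rcases hgapnat with h | h
      · have hce2 : ctr (e j) i0 - ctr (e i) i0 =
            ((((e j) i0 : ℕ):ℝ) - (((e i) i0 : ℕ):ℝ))*(r/k) := by rw [hctr]; ring
        have hR : (((e i) i0 : ℕ):ℝ) + 2 ≤ (((e j) i0 : ℕ):ℝ) := by exact_mod_cast h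
        have h2 : (2:ℝ)*(r/k) ≤ ((((e j) i0 : ℕ):ℝ) - (((e i) i0 : ℕ):ℝ))*(r/k) :=
          mul_le_mul_of_nonneg_right (by linarith) hrk.le
        rw [abs_sub_comm, hce2]
        exact le_trans h2 (le_abs_self _)
      · have hR : (((e j) i0 : ℕ):ℝ) + 2 ≤ (((e i) i0 : ℕ):ℝ) := by exact_mod_cast h
        have : (2:ℝ)*(r/k) ≤ ((((e i) i0 : ℕ):ℝ) - (((e j) i0 : ℕ):ℝ))*(r/k) :=
          mul_le_mul_of_nonneg_right (by linarith) hrk.le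
        rw [hce]
        exact le_trans this (le_abs_self _)
    have hq1 : |pt (e i) i0 - ctr (e i) i0| ≤ (r/k)/2 := (hQmem _ _).1 (hpt2 (e i) (heS i)).1 i0
    have hq2 : |pt (e j) i0 - ctr (e j) i0| ≤ (r/k)/2 := (hQmem _ _).1 (hpt2 (e j) (heS j)).1 i0
    have hptgap : r/k ≤ |pt (e i) i0 - pt (e j) i0| := by
      have ht : |ctr (e i) i0 - ctr (e j) i0| ≤
          |ctr (e i) i0 - pt (e i) i0| + |pt (e i) i0 - pt (e j) i0| + |pt (e j) i0 - ctr (e j) i0| := by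
        calc |ctr (e i) i0 - ctr (e j) i0| ≤
            |ctr (e i) i0 - pt (e j) i0| + |pt (e j) i0 - ctr (e j) i0| := abs_sub_le _ _ _
          _ ≤ (|ctr (e i) i0 - pt (e i) i0| + |pt (e i) i0 - pt (e j) i0|) +
              |pt (e j) i0 - ctr (e j) i0| := by
              have := abs_sub_le (ctr (e i) i0) (pt (e i) i0) (pt (e j) i0)
              linarith
      have hc1 : |ctr (e i) i0 - pt (e i) i0| ≤ (r/k)/2 := by rwa [abs_sub_comm] at hq1
      linarith
    rw [Set.disjoint_left]
    intro y hy1 hy2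
    have ha1 : |y i0 - pt (e i) i0| < (r/k)/2 := hy1 i0
    have ha2 : |y i0 - pt (e j) i0| < (r/k)/2 := hy2 i0
    have ha3 : |pt (e i) i0 - pt (e j) i0| ≤ |pt (e i) i0 - y i0| + |y i0 - pt (e j) i0| :=
      abs_sub_le _ _ _
    rw [abs_sub_comm (pt (e i) i0) (y i0)] at ha3
    linarith
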